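/- In the origami monoid O_n, if w = β_i u v with u a nonempty product of α-generators whose first letter is α_i and v a nonempty product of β-generators, then w is Green's L-related to uv. Dually, if w = u v α_j with v nonempty ending in β_j and u nonempty, then w is R-related to uv. -/

import Mathlib

namespace Origami

/-- Generators of the origami monoid: a type bit (`true` for α, `false` for β)
and an index in `Fin (n-1)` (so indices `1,…,n-1` are represented by `0,…,n-2`). -/
inductive Gen (n : ℕ) : Type
  | mk (t : Bool) (i : Fin (n - 1))
deriving DecidableEq

/-- Words over the generators. -/
abbrev W (n : ℕ) := FreeMonoid (Gen n)

/-- The word consisting of the single generator of type `t` and index `i`. -/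
def go {n : ℕ} (t : Bool) (i : Fin (n - 1)) : W n := FreeMonoid.of (Gen.mk t i)

/-- `|i - j| = 1`. -/
def adj {n : ℕ} (i j : Fin (n - 1)) : Prop := i.val + 1 = j.val ∨ j.val + 1 = i.val

/-- `|i - j| ≥ 2`. -/
def far {n : ℕ} (i j : Fin (n - 1)) : Prop := i.val + 2 ≤ j.val ∨ j.val + 2 ≤ i.val

/-- The defining relations (1)–(5), (1a), (2a), (3a) of the origami monoid. -/
inductive Rel (n : ℕ) : W n → W n → Prop
  | idem (t : Bool) (i : Fin (n - 1)) : Rel n (go t i * go t i) (go t i)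
  | jones (t : Bool) (i j : Fin (n - 1)) (h : adj i j) :
      Rel n (go t i * go t j * go t i) (go t i)
  | inter (t : Bool) (i j : Fin (n - 1)) (h : i ≠ j) :
      Rel n (go t i * go (!t) j) (go (!t) j * go t i)
  | intra (t : Bool) (i j : Fin (n - 1)) (h : far i j) :
      Rel n (go t i * go t j) (go t j * go t i)
  | idemA (t : Bool) (i : Fin (n - 1)) :
      Rel n (go t i * go (!t) i * (go t i * go (!t) i)) (go t i * go (!t) i)
  | jonesA (t : Bool) (i j : Fin (n - 1)) (h : adj i j) :
      Rel n (go t i * go (!t) i * (go t j * go (!t) j) * (go t i * go (!t) i))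
            (go t i * go (!t) i)

/-- The congruence generated by the origami relations. -/
def oriCon (n : ℕ) : Con (W n) := conGen (Rel n)

/-- The origami monoid `O_n`. -/
abbrev O (n : ℕ) := (oriCon n).Quotient

/-- The image of a generator in `O_n`. -/
def gen {n : ℕ} (t : Bool) (i : Fin (n - 1)) : O n := (oriCon n).mk' (go t i)

/-- The generator `α_i`. -/
def genA {n : ℕ} (i : Fin (n - 1)) : O n := gen true i

/-- The generator `β_i`. -/
def genB {n : ℕ} (i : Fin (n - 1)) : O n := gen false i


variable {n : ℕ}

private lemma rel_eq {x y : W n} (h : Rel n x y) : (oriCon n).mk' x = (oriCon n).mk' y :=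
  ((oriCon n).eq).mpr (ConGen.Rel.of _ _ h)

private lemma adj_symm {i j : Fin (n-1)} (h : adj i j) : adj j i := h.symm

private lemma adj_ne {i j : Fin (n-1)} (h : adj i j) : i ≠ j := by
  intro e; subst e; unfold adj at h; omega

private lemma tri (i k : Fin (n-1)) : k = i ∨ adj i k ∨ far i k := by
  by_cases h : k.val = i.val
  · exact Or.inl (Fin.ext h)
  · right; unfold adj far; omega

-- basic relations at the quotient level, generic type t
private lemma g_idem (t : Bool) (i : Fin (n-1)) : gen t i * gen t i = gen t i := by
  simpa [map_mul, gen] using rel_eq (Rel.idem (n := n) t i)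

private lemma g_jones {i j : Fin (n-1)} (t : Bool) (h : adj i j) :
    gen t i * gen t j * gen t i = gen t i := by
  simpa [map_mul, gen] using rel_eq (Rel.jones (n := n) t i j h)

private lemma g_inter {i j : Fin (n-1)} (t : Bool) (h : i ≠ j) :
    gen t i * gen (!t) j = gen (!t) j * gen t i := by
  simpa [map_mul, gen] using rel_eq (Rel.inter (n := n) t i j h)

private lemma g_intra {i j : Fin (n-1)} (t : Bool) (h : far i j) :
    gen t i * gen t j = gen t j * gen t i := by
  simpa [map_mul, gen] using rel_eq (Rel.intra (n := n) t i j h)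

private lemma g_idemA (t : Bool) (i : Fin (n-1)) :
    gen t i * gen (!t) i * (gen t i * gen (!t) i) = gen t i * gen (!t) i := by
  simpa [map_mul, gen] using rel_eq (Rel.idemA (n := n) t i)

private lemma g_jonesA {i j : Fin (n-1)} (t : Bool) (h : adj i j) :
    gen t i * gen (!t) i * (gen t j * gen (!t) j) * (gen t i * gen (!t) i)
      = gen t i * gen (!t) i := by
  simpa [map_mul, gen] using rel_eq (Rel.jonesA (n := n) t i j h)



private lemma g_interT {i j : Fin (n-1)} (h : i ≠ j) :
    gen true i * gen false j = gen false j * gen true i := g_inter true h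

private lemma g_interF {i j : Fin (n-1)} (h : i ≠ j) :
    gen false i * gen true j = gen true j * gen false i := g_inter false h

private lemma g_idemAT (i : Fin (n-1)) :
    gen true i * gen false i * (gen true i * gen false i) = gen true i * gen false i :=
  g_idemA true i

private lemma g_jonesAT {i j : Fin (n-1)} (h : adj i j) :
    gen true i * gen false i * (gen true j * gen false j) * (gen true i * gen false i)
      = gen true i * gen false i := g_jonesA true h

-- context versions (with a trailing factor) of the relations
private lemma caa (i : Fin (n-1)) (x : O n) : genA i * (genA i * x) = genA i * x := by
  calc genA i * (genA i * x) = (gen true i * gen true i) * x := by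
        simp only [genA, mul_assoc]
    _ = genA i * x := by rw [g_idem]; rfl

private lemma cbb (i : Fin (n-1)) (x : O n) : genB i * (genB i * x) = genB i * x := by
  calc genB i * (genB i * x) = (gen false i * gen false i) * x := by
        simp only [genB, mul_assoc]
    _ = genB i * x := by rw [g_idem]; rfl

private lemma caja {i j : Fin (n-1)} (h : adj i j) (x : O n) :
    genA i * (genA j * (genA i * x)) = genA i * x := by
  calc genA i * (genA j * (genA i * x)) = (gen true i * gen true j * gen true i) * x := by
        simp only [genA, mul_assoc]
    _ = genA i * x := by rw [g_jones true h]; rfl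

private lemma cbjb {i j : Fin (n-1)} (h : adj i j) (x : O n) :
    genB i * (genB j * (genB i * x)) = genB i * x := by
  calc genB i * (genB j * (genB i * x)) = (gen false i * gen false j * gen false i) * x := by
        simp only [genB, mul_assoc]
    _ = genB i * x := by rw [g_jones false h]; rfl

private lemma cab {i j : Fin (n-1)} (h : i ≠ j) (x : O n) :
    genA i * (genB j * x) = genB j * (genA i * x) := by
  calc genA i * (genB j * x) = (gen true i * gen false j) * x := by
        simp only [genA, genB, mul_assoc]
    _ = (gen false j * gen true i) * x := by rw [g_interT h]
    _ = genB j * (genA i * x) := by simp only [genA, genB, mul_assoc]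

private lemma cba {i j : Fin (n-1)} (h : i ≠ j) (x : O n) :
    genB i * (genA j * x) = genA j * (genB i * x) := by
  calc genB i * (genA j * x) = (gen false i * gen true j) * x := by
        simp only [genA, genB, mul_assoc]
    _ = (gen true j * gen false i) * x := by rw [g_interF h]
    _ = genA j * (genB i * x) := by simp only [genA, genB, mul_assoc]

private lemma caca {i j : Fin (n-1)} (h : far i j) (x : O n) :
    genA i * (genA j * x) = genA j * (genA i * x) := by
  calc genA i * (genA j * x) = (gen true i * gen true j) * x := by
        simp only [genA, mul_assoc]
    _ = (gen true j * gen true i) * x := by rw [g_intra true h]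
    _ = genA j * (genA i * x) := by simp only [genA, mul_assoc]

private lemma cidemA (i : Fin (n-1)) (x : O n) :
    genA i * (genB i * (genA i * (genB i * x))) = genA i * (genB i * x) := by
  calc genA i * (genB i * (genA i * (genB i * x)))
      = (gen true i * gen false i * (gen true i * gen false i)) * x := by
        simp only [genA, genB, mul_assoc]
    _ = (gen true i * gen false i) * x := by rw [g_idemAT]
    _ = genA i * (genB i * x) := by simp only [genA, genB, mul_assoc]

private lemma cjA {i j : Fin (n-1)} (h : adj i j) (x : O n) :
    genA i * (genB i * (genA j * (genB j * (genA i * (genB i * x)))))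
      = genA i * (genB i * x) := by
  calc genA i * (genB i * (genA j * (genB j * (genA i * (genB i * x)))))
      = (gen true i * gen false i * (gen true j * gen false j) * (gen true i * gen false i)) * x := by
        simp only [genA, genB, mul_assoc]
    _ = (gen true i * gen false i) * x := by rw [g_jonesAT h]
    _ = genA i * (genB i * x) := by simp only [genA, genB, mul_assoc]


-- key identity S : β_i (α_k α_i β_i) = α_k α_i β_i  for |i-k|=1
private lemma keyS {i k : Fin (n-1)} (h : adj i k) (x : O n) :
    genB i * (genA k * (genA i * (genB i * x))) = genA k * (genA i * (genB i * x)) := by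
  have hik : i ≠ k := adj_ne h
  have hki : k ≠ i := hik.symm
  have hka : adj k i := adj_symm h
  conv_lhs => rw [← cjA h x]
  conv_lhs => rw [cba hik (genB k * (genA i * (genB i * x)))]
  conv_lhs => rw [caja hka (genB i * (genB k * (genA i * (genB i * x))))]
  conv_lhs => rw [cba hik (genB i * (genB k * (genA i * (genB i * x))))]
  conv_lhs => rw [cbb i (genB k * (genA i * (genB i * x)))]
  conv_lhs => rw [← caja hka (genB i * (genB k * (genA i * (genB i * x))))]
  conv_lhs => rw [cab hki (genB k * (genA i * (genB i * x)))]
  conv_lhs => rw [cjA h x]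

-- key identity : β_I β_i (α_i β_I) = α_i β_I  for |i-I|=1
private lemma keyW2base {i I : Fin (n-1)} (h : adj i I) (x : O n) :
    genB I * (genB i * (genA i * (genB I * x))) = genA i * (genB I * x) := by
  have hiI : i ≠ I := adj_ne h
  conv_lhs => rw [cab hiI x]
  conv_lhs => rw [cbjb (adj_symm h) (genA i * x)]
  rw [cab hiI x]

-- key identity S2 : β_I β_i (α_i α_I β_I) = α_i α_I β_I  for |i-I|=1
private lemma keyS2 {i I : Fin (n-1)} (h : adj i I) (x : O n) :
    genB I * (genB i * (genA i * (genA I * (genB I * x))))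
      = genA i * (genA I * (genB I * x)) := by
  have hiI : i ≠ I := adj_ne h
  have hIi : I ≠ i := hiI.symm
  have hIa : adj I i := adj_symm h
  conv_lhs => rw [← cjA hIa x]
  conv_lhs => rw [cba hIi (genB i * (genA I * (genB I * x)))]
  conv_lhs => rw [caja h (genB I * (genB i * (genA I * (genB I * x))))]
  conv_lhs => rw [cab hiI (genB i * (genA I * (genB I * x)))]
  conv_lhs => rw [cbjb hIa (genA i * (genB i * (genA I * (genB I * x))))]
  conv_lhs => rw [cba hIi (genB i * (genA I * (genB I * x)))]
  conv_lhs => rw [← caja h (genB I * (genB i * (genA I * (genB I * x))))]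
  conv_lhs => rw [cab hiI (genB i * (genA I * (genB I * x)))]
  conv_lhs => rw [cjA hIa x]


private lemma far_symm {i j : Fin (n-1)} (h : far i j) : far j i := h.symm

private lemma far_ne {i j : Fin (n-1)} (h : far i j) : i ≠ j := by
  intro e; subst e; unfold far at h; omega

private def PA (l : List (Fin (n-1))) : O n := (l.map genA).prod

private lemma mainWV (i : Fin (n-1)) : ∀ N (l : List (Fin (n-1))), l.length ≤ N →
    (∀ x : O n, genA i * (genB i * (genA i * (PA l * (genB i * x))))
        = genA i * (PA l * (genB i * x))) ∧
    (∀ x : O n, genA i * (genB i * (genA i * (PA l * (genA i * (genB i * x)))))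
        = genA i * (PA l * (genA i * (genB i * x)))) := by
  intro N
  induction N with
  | zero =>
    intro l hl
    have hnil : l = [] := List.eq_nil_of_length_eq_zero (Nat.le_zero.mp hl)
    subst hnil
    constructor
    · intro x
      simp only [PA, List.map_nil, List.prod_nil, one_mul]
      exact cidemA i x
    · intro x
      simp only [PA, List.map_nil, List.prod_nil, one_mul]
      rw [caa i (genB i * x)]
      exact cidemA i x
  | succ N ih =>
    intro l hl
    rcases List.eq_nil_or_concat l with rfl | ⟨l', k, rfl⟩
    · exact ih [] (Nat.zero_le N)
    · have hl' : l'.length ≤ N := by simp at hl; omega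
      obtain ⟨ihW, ihV⟩ := ih l' hl'
      have hPA : PA (l' ++ [k]) = PA l' * genA k := by
        simp [PA]
      constructor
      · intro x
        simp only [List.concat_eq_append, hPA, mul_assoc]
        by_cases hk : k = i
        · subst hk; exact ihV x
        · rw [cab hk x]
          exact ihW (genA k * x)
      · intro x
        simp only [List.concat_eq_append, hPA, mul_assoc]
        rcases tri i k with rfl | hadj | hfar
        · rw [caa k (genB k * x)]
          exact ihV x
        · rw [← keyS hadj x]
          exact ihW (genA k * (genA i * (genB i * x)))
        · rw [caca (far_symm hfar) (genB i * x), cab (far_ne hfar).symm x]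
          exact ihV (genA k * x)

private lemma mainW2V2 {i I : Fin (n-1)} (hadj : adj i I) :
    ∀ N (l : List (Fin (n-1))), l.length ≤ N →
    (∀ x : O n, genB I * (genB i * (genA i * (PA l * (genB I * x))))
        = genA i * (PA l * (genB I * x))) ∧
    (∀ x : O n, genB I * (genB i * (genA i * (PA l * (genA I * (genB I * x)))))
        = genA i * (PA l * (genA I * (genB I * x)))) := by
  intro N
  induction N with
  | zero =>
    intro l hl
    have hnil : l = [] := List.eq_nil_of_length_eq_zero (Nat.le_zero.mp hl)
    subst hnil
    constructor
    · intro x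
      simp only [PA, List.map_nil, List.prod_nil, one_mul]
      exact keyW2base hadj x
    · intro x
      simp only [PA, List.map_nil, List.prod_nil, one_mul]
      exact keyS2 hadj x
  | succ N ih =>
    intro l hl
    rcases List.eq_nil_or_concat l with rfl | ⟨l', k, rfl⟩
    · exact ih [] (Nat.zero_le N)
    · have hl' : l'.length ≤ N := by simp at hl; omega
      obtain ⟨ihW, ihV⟩ := ih l' hl'
      have hPA : PA (l' ++ [k]) = PA l' * genA k := by
        simp [PA]
      constructor
      · intro x
        simp only [List.concat_eq_append, hPA, mul_assoc]
        by_cases hk : k = I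
        · subst hk; exact ihV x
        · rw [cab hk x]
          exact ihW (genA k * x)
      · intro x
        simp only [List.concat_eq_append, hPA, mul_assoc]
        rcases tri I k with rfl | hadj2 | hfar
        · rw [caa k (genB k * x)]
          exact ihV x
        · rw [← keyS hadj2 x]
          exact ihW (genA k * (genA I * (genB I * x)))
        · rw [caca (far_symm hfar) (genB I * x), cab (far_ne hfar).symm x]
          exact ihV (genA k * x)


-- the reversing, type-swapping anti-automorphism
private def swapGen : Gen n → (O n)ᵐᵒᵖ := fun g =>
  match g with
  | Gen.mk t i => MulOpposite.op (gen (!t) i)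

private def phiF : W n →* (O n)ᵐᵒᵖ := FreeMonoid.lift swapGen

private lemma phiF_go (t : Bool) (i : Fin (n-1)) :
    phiF (go t i) = MulOpposite.op (gen (!t) i) := by
  simp [phiF, go, swapGen]

private lemma phiF_ker : oriCon n ≤ Con.ker phiF := by
  have : conGen (Rel n) ≤ Con.ker phiF := by
    refine Con.conGen_le.mpr fun x y hxy => ?_
    rw [Con.ker_rel]
    apply MulOpposite.unop_injective
    cases hxy with
    | idem t i =>
      simp only [map_mul, phiF_go, MulOpposite.unop_mul, MulOpposite.unop_op]
      exact g_idem (!t) i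
    | jones t i j h =>
      simp only [map_mul, phiF_go, MulOpposite.unop_mul, MulOpposite.unop_op, mul_assoc]
      have := g_jones (!t) h
      simpa [mul_assoc] using this
    | inter t i j h =>
      simp only [map_mul, phiF_go, MulOpposite.unop_mul, MulOpposite.unop_op, Bool.not_not]
      exact g_inter t h.symm
    | intra t i j h =>
      simp only [map_mul, phiF_go, MulOpposite.unop_mul, MulOpposite.unop_op]
      exact g_intra (!t) (far_symm h)
    | idemA t i =>
      simp only [map_mul, phiF_go, MulOpposite.unop_mul, MulOpposite.unop_op, Bool.not_not,
        mul_assoc]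
      have := g_idemA t i
      simpa [Bool.not_not, mul_assoc] using this
    | jonesA t i j h =>
      simp only [map_mul, phiF_go, MulOpposite.unop_mul, MulOpposite.unop_op, Bool.not_not,
        mul_assoc]
      have := g_jonesA t h
      simpa [Bool.not_not, mul_assoc] using this
  exact this

private def psi : O n →* (O n)ᵐᵒᵖ := Con.lift (oriCon n) phiF phiF_ker

private def Phi (x : O n) : O n := (psi x).unop

private lemma Phi_mul (x y : O n) : Phi (x * y) = Phi y * Phi x := by
  simp [Phi, map_mul]

private lemma Phi_gen (t : Bool) (i : Fin (n-1)) : Phi (gen t i) = gen (!t) i := by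
  have : psi (gen t i) = phiF (go t i) := by
    simp [psi, gen]
  simp [Phi, this, phiF_go]


private lemma Phi_one : Phi (1 : O n) = 1 := by
  simp [Phi, map_one]

private lemma Phi_genA (i : Fin (n-1)) : Phi (genA i) = genB i := Phi_gen true i

private lemma Phi_genB (i : Fin (n-1)) : Phi (genB i) = genA i := Phi_gen false i

private lemma Phi_Phi (x : O n) : Phi (Phi x) = x := by
  obtain ⟨w, rfl⟩ := Con.mk'_surjective (c := oriCon n) x
  induction w using FreeMonoid.recOn with
  | one => simp [map_one, Phi_one]
  | of_mul g w ihw =>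
    rcases g with ⟨t, i⟩
    have : (oriCon n).mk' (FreeMonoid.of (Gen.mk t i) * w)
        = gen t i * (oriCon n).mk' w := by
      simp [map_mul, gen, go]
    rw [this, Phi_mul, Phi_mul, Phi_gen, Phi_gen]
    rw [Bool.not_not]
    exact congrArg (fun y => gen t i * y) ihw

private lemma Phi_prodA (l : List (Fin (n-1))) :
    Phi ((l.map genA).prod) = (l.reverse.map genB).prod := by
  induction l with
  | nil => simp [Phi_one]
  | cons a l ih =>
    simp [List.map_cons, List.prod_cons, Phi_mul, ih, Phi_genA,
      List.reverse_cons, List.map_append, List.prod_append]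

private lemma Phi_prodB (l : List (Fin (n-1))) :
    Phi ((l.map genB).prod) = (l.reverse.map genA).prod := by
  induction l with
  | nil => simp [Phi_one]
  | cons a l ih =>
    simp [List.map_cons, List.prod_cons, Phi_mul, ih, Phi_genB,
      List.reverse_cons, List.map_append, List.prod_append]


private lemma coreL (i I : Fin (n-1)) (h : adj i I ∨ i = I) (lu lv : List (Fin (n-1))) :
    ∃ z : O n, z * (genB i * ((i::lu).map genA).prod * ((I::lv).map genB).prod)
      = ((i::lu).map genA).prod * ((I::lv).map genB).prod := by
  rcases h with hadj | rfl
  · refine ⟨genB I, ?_⟩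
    have H := (mainW2V2 hadj lu.length lu le_rfl).1 ((lv.map genB).prod)
    simp only [PA] at H
    simp only [List.map_cons, List.prod_cons, mul_assoc] at H ⊢
    exact H
  · refine ⟨genA i, ?_⟩
    have H := (mainWV i lu.length lu le_rfl).1 ((lv.map genB).prod)
    simp only [PA] at H
    simp only [List.map_cons, List.prod_cons, mul_assoc] at H ⊢
    exact H

private lemma coreR (j J : Fin (n-1)) (h : adj j J ∨ j = J) (lu lv : List (Fin (n-1))) :
    ∃ z : O n, ((lu ++ [J]).map genA).prod * ((lv ++ [j]).map genB).prod * genA j * z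
      = ((lu ++ [J]).map genA).prod * ((lv ++ [j]).map genB).prod := by
  obtain ⟨z, hz⟩ := coreL j J h lv.reverse lu.reverse
  refine ⟨Phi z, ?_⟩
  have key := congrArg Phi hz
  rw [Phi_mul] at key
  have e1 : (j :: lv.reverse) = (lv ++ [j]).reverse := by simp
  have e2 : (J :: lu.reverse) = (lu ++ [J]).reverse := by simp
  rw [e1, e2] at key
  rw [Phi_mul, Phi_mul, Phi_mul] at key
  rw [Phi_genB] at key
  rw [Phi_prodB, Phi_prodA, List.reverse_reverse, List.reverse_reverse] at key
  calc ((lu ++ [J]).map genA).prod * ((lv ++ [j]).map genB).prod * genA j * Phi z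
      = (((lu ++ [J]).map genA).prod * (((lv ++ [j]).map genB).prod * genA j)) * Phi z := by
        simp only [mul_assoc]
    _ = ((lu ++ [J]).map genA).prod * ((lv ++ [j]).map genB).prod := by
        rw [key]


end Origami

/-- Green's `L` relation: `a L b` iff `Ma = Mb`. -/
def GreenL {M : Type*} [Monoid M] (a b : M) : Prop :=
  Set.range (fun x : M => x * a) = Set.range (fun x : M => x * b)

/-- Green's `R` relation: `a R b` iff `aM = bM`. -/
def GreenR {M : Type*} [Monoid M] (a b : M) : Prop :=
  Set.range (fun x : M => a * x) = Set.range (fun x : M => b * x)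

/-- Green's `D` relation: `a D b` iff there is `c` with `a L c` and `c R b`. -/
def GreenD {M : Type*} [Monoid M] (a b : M) : Prop :=
  ∃ c : M, GreenL a c ∧ GreenR c b


private lemma greenL_of {M : Type*} [Monoid M] {a b p q : M}
    (h1 : a = p * b) (h2 : b = q * a) : GreenL a b := by
  unfold GreenL
  ext y
  simp only [Set.mem_range]
  constructor
  · rintro ⟨c, rfl⟩
    exact ⟨c * p, by rw [mul_assoc, ← h1]⟩
  · rintro ⟨c, rfl⟩
    exact ⟨c * q, by rw [mul_assoc, ← h2]⟩

private lemma greenR_of {M : Type*} [Monoid M] {a b p q : M}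
    (h1 : a = b * p) (h2 : b = a * q) : GreenR a b := by
  unfold GreenR
  ext y
  simp only [Set.mem_range]
  constructor
  · rintro ⟨c, rfl⟩
    exact ⟨p * c, by rw [← mul_assoc, ← h1]⟩
  · rintro ⟨c, rfl⟩
    exact ⟨q * c, by rw [← mul_assoc, ← h2]⟩

open Origami in
/-- If `w = β_i u v` with `u` a nonempty α-word with first letter `α_i` and `v` a nonempty
β-word (whose first index `I` satisfies `|i - I| ≤ 1`), then `w L uv`.  Dually, if
`w = u v α_j` with `v` nonempty ending in `β_j` (whose last index `J` of `u` satisfies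
`|j - J| ≤ 1`) and `u` nonempty, then `w R uv`. -/
theorem origami_L_R_related (n : ℕ) :
    (∀ (i : Fin (n - 1)) (lu lv : List (Fin (n - 1))),
      lu.head? = some i → lv ≠ [] →
      (∀ I, lv.head? = some I → adj i I ∨ i = I) →
      GreenL (genB i * (lu.map genA).prod * (lv.map genB).prod)
             ((lu.map genA).prod * (lv.map genB).prod)) ∧
    (∀ (j : Fin (n - 1)) (lu lv : List (Fin (n - 1))),
      lv.getLast? = some j → lu ≠ [] →
      (∀ J, lu.getLast? = some J → adj j J ∨ j = J) →
      GreenR ((lu.map genA).prod * (lv.map genB).prod * genA j)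
             ((lu.map genA).prod * (lv.map genB).prod)) := by
  constructor
  · intro i lu lv hhead hne hI
    rcases lu with _ | ⟨i', lu'⟩
    · simp at hhead
    rcases lv with _ | ⟨I, lv'⟩
    · exact absurd rfl hne
    have hi : i' = i := by simpa using hhead
    subst hi
    obtain ⟨z, hz⟩ := Origami.coreL i' I (hI I rfl) lu' lv'
    exact greenL_of (p := genB i') (q := z) (by rw [mul_assoc]) hz.symm
  · intro j lu lv hlast hne hJ
    rcases List.eq_nil_or_concat lv with rfl | ⟨lv0, j', rfl⟩
    · simp at hlast
    rcases List.eq_nil_or_concat lu with rfl | ⟨lu0, J, rfl⟩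
    · exact absurd rfl hne
    have hj : j' = j := by
      simpa [List.concat_eq_append, List.getLast?_concat] using hlast
    subst hj
    have hcond : adj j' J ∨ j' = J := hJ J (by simp [List.concat_eq_append, List.getLast?_concat])
    obtain ⟨z, hz⟩ := Origami.coreR j' J hcond lu0 lv0
    try simp only [List.concat_eq_append]
    try simp only [List.concat_eq_append] at hz
    exact greenR_of (p := genA j') (q := z) rfl hz.symm
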